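/- arXiv:1503.01807 — 5 statements merged into one kernel-verified Lean document; each statement's English description precedes it below -/
import Mathlib

section
/- For every x ∈ H¹₀(0,1) (i.e., x absolutely continuous on [0,1] with x(0)=x(1)=0 and x' ∈ L²), the Poincaré inequality holds: ∫₀¹ x(t)² dt ≤ (1/π²) ∫₀¹ x'(t)² dt. -/
open Set intervalIntegral MeasureTheory Complex AddCircle

noncomputable section Wirtinger

instance : Fact ((0:ℝ) < 2) := ⟨two_pos⟩

abbrev h02 : (0:ℝ) < 0 + 2 := lt_add_of_pos_right 0 two_pos

variable (x x' : ℝ → ℝ)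

def gr (t : ℝ) : ℝ := if t ≤ 1 then x t else -x (2 - t)
def gr' (t : ℝ) : ℝ := if t ≤ 1 then deriv x t else deriv x (2 - t)
def g (t : ℝ) : ℂ := (gr x t : ℂ)
def g' (t : ℝ) : ℂ := (gr' x t : ℂ)

theorem gr'_meas : Measurable (gr' x) := by
  have md : Measurable (deriv x) := measurable_deriv x
  exact Measurable.ite (measurableSet_le measurable_id measurable_const) md
    (md.comp (measurable_const.sub measurable_id))

theorem liftIoc_meas_of_meas {f : ℝ → ℂ} (hm : Measurable f) :
    Measurable (liftIoc 2 0 f) :=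
  (hm.comp measurable_subtype_coe).comp (measurableEquivIoc 2 0).measurable

theorem liftIoc_meas_of_cont {f : ℝ → ℂ} (hc : ContinuousOn f (Icc 0 2)) :
    Measurable (liftIoc 2 0 f) := by
  have h1 : ContinuousOn f (Ioc 0 (0 + 2)) := hc.mono (fun t ht => ⟨ht.1.le, by
    have := ht.2; norm_num at this ⊢; linarith⟩)
  have h2 : Continuous ((Ioc (0:ℝ) (0 + 2)).restrict f) :=
    continuousOn_iff_continuous_restrict.mp h1
  exact h2.measurable.comp (measurableEquivIoc 2 0).measurable

variable {x x'}

section main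
variable (hderiv : ∀ t ∈ Icc (0:ℝ) 1, HasDerivAt x (x' t) t)
    (hx0 : x 0 = 0) (hx1 : x 1 = 0)
    (hL2 : IntervalIntegrable (fun t => (x' t)^2) MeasureTheory.volume 0 1)

set_option linter.unusedSectionVars false

include hderiv hx1 in
theorem key_deriv : ∀ t ∈ Ioo (0:ℝ) 2, HasDerivAt (g x) (g' x t) t := by
  intro t ht
  have hd : ∀ s ∈ Icc (0:ℝ) 1, deriv x s = x' s := fun s hs => (hderiv s hs).deriv
  have href : ∀ u : ℝ, 2 - u ∈ Icc (0:ℝ) 1 →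
      HasDerivAt (fun s : ℝ => -x (2 - s)) (x' (2 - u)) u := by
    intro u hu
    have h2 : HasDerivAt (fun s : ℝ => 2 - s) (-1 : ℝ) u := by
      simpa using (hasDerivAt_id u).const_sub 2
    have := (HasDerivAt.comp u (hderiv _ hu) h2).neg
    simp only [mul_neg, mul_one, neg_neg] at this
    exact this
  rcases lt_trichotomy t 1 with h | h | h
  · have h1 : t ∈ Icc (0:ℝ) 1 := ⟨ht.1.le, h.le⟩
    have : HasDerivAt (g x) ((x' t : ℂ)) t := by
      refine ((hderiv t h1).ofReal_comp).congr_of_eventuallyEq ?_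
      filter_upwards [Iio_mem_nhds h] with s hs
      simp [g, gr, le_of_lt (mem_Iio.mp hs)]
    simpa [g', gr', h.le, hd t h1] using this
  · subst h
    have h1 : (1:ℝ) ∈ Icc (0:ℝ) 1 := ⟨by norm_num, le_refl _⟩
    have hL : HasDerivWithinAt (g x) ((x' 1 : ℂ)) (Iic 1) 1 := by
      refine ((hderiv 1 h1).ofReal_comp).hasDerivWithinAt.congr ?_ (by simp [g, gr])
      intro s hs; simp [g, gr, mem_Iic.mp hs]
    have hR : HasDerivWithinAt (g x) ((x' 1 : ℂ)) (Ici 1) 1 := by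
      have hcomp := href 1 (by norm_num)
      rw [show (2:ℝ) - 1 = 1 by norm_num] at hcomp
      refine (hcomp.ofReal_comp).hasDerivWithinAt.congr ?_
        (by simp [g, gr]; norm_num [hx1])
      intro s hs
      rcases eq_or_lt_of_le (mem_Ici.mp hs) with h | h
      · simp [g, gr, ← h]; norm_num [hx1]
      · simp [g, gr, not_le.mpr h]
    have := (hL.union hR)
    rw [Iic_union_Ici, hasDerivWithinAt_univ] at this
    simpa [g', gr', hd 1 h1] using this
  · have h1 : 2 - t ∈ Icc (0:ℝ) 1 := ⟨by linarith [ht.2], by linarith⟩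
    have hcomp := href t h1
    have : HasDerivAt (g x) ((x' (2 - t) : ℂ)) t := by
      refine (hcomp.ofReal_comp).congr_of_eventuallyEq ?_
      filter_upwards [Ioi_mem_nhds h] with s hs
      simp [g, gr, not_le.mpr (mem_Ioi.mp hs)]
    simpa [g', gr', not_le.mpr h, hd _ h1] using this

include hderiv hx1 in
theorem key_cont : ContinuousOn (g x) (Icc 0 2) := by
  have hc : ∀ t ∈ Icc (0:ℝ) 1, ContinuousAt x t := fun t ht => (hderiv t ht).continuousAt
  intro t ht
  rcases lt_trichotomy t 1 with h | h | h
  · have : ContinuousAt (g x) t := by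
      have : ContinuousAt (fun s => ((x s : ℂ))) t :=
        Complex.continuous_ofReal.continuousAt.comp (hc t ⟨ht.1, h.le⟩)
      refine this.congr ?_
      filter_upwards [Iio_mem_nhds h] with s hs
      simp [g, gr, le_of_lt (mem_Iio.mp hs)]
    exact this.continuousWithinAt
  · subst h
    have hL : ContinuousWithinAt (g x) (Iic 1) 1 := by
      refine ((Complex.continuous_ofReal.continuousAt.comp
        (hc 1 ⟨by norm_num, le_refl _⟩)).continuousWithinAt).congr ?_ (by simp [g, gr])
      intro s hs; simp [g, gr, mem_Iic.mp hs]
    have hR : ContinuousWithinAt (g x) (Ici 1) 1 := by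
      have h21 : ContinuousAt x ((fun s : ℝ => 2 - s) 1) := by
        norm_num; exact hc 1 ⟨by norm_num, le_refl _⟩
      have hc2 : ContinuousAt (fun s : ℝ => ((-x (2 - s) : ℝ) : ℂ)) 1 := by
        apply Complex.continuous_ofReal.continuousAt.comp
        exact (h21.comp (by fun_prop : Continuous (fun s : ℝ => 2 - s)).continuousAt).neg
      refine hc2.continuousWithinAt.congr ?_ (by simp [g, gr]; norm_num [hx1])
      intro s hs
      rcases eq_or_lt_of_le (mem_Ici.mp hs) with h | h
      · simp [g, gr, ← h]; norm_num [hx1]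
      · simp [g, gr, not_le.mpr h]
    have := hL.union hR
    rw [Iic_union_Ici] at this
    exact this.mono (subset_univ _)
  · have : ContinuousAt (g x) t := by
      have h1 : 2 - t ∈ Icc (0:ℝ) 1 := ⟨by linarith [ht.2], by linarith⟩
      have hc2 : ContinuousAt (fun s : ℝ => ((-x (2 - s) : ℝ) : ℂ)) t := by
        apply Complex.continuous_ofReal.continuousAt.comp
        exact (ContinuousAt.comp (hc _ h1)
          (by fun_prop : Continuous (fun s : ℝ => 2 - s)).continuousAt).neg
      refine hc2.congr ?_
      filter_upwards [Ioi_mem_nhds h] with s hs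
      simp [g, gr, not_le.mpr (mem_Ioi.mp hs)]
    exact this.continuousWithinAt

include hderiv hx1 hL2 in
theorem gr'_eq_left : EqOn (fun t => (gr' x t)^2) (fun t => (x' t)^2) (Icc 0 1) := by
  intro t ht
  simp only [gr', ht.2, if_pos, (hderiv t ht).deriv]

include hderiv hx1 hL2 in
theorem int_gr'sq_left : IntervalIntegrable (fun t => (gr' x t)^2) volume 0 1 := by
  rw [intervalIntegrable_iff_integrableOn_Ioc_of_le (by norm_num)]
  refine ((intervalIntegrable_iff_integrableOn_Ioc_of_le (by norm_num)).mp hL2).congr_fun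
    (fun t ht => ?_) measurableSet_Ioc
  exact ((gr'_eq_left hderiv hx1 hL2) ⟨ht.1.le, ht.2⟩).symm

include hderiv hx1 hL2 in
theorem int_gr'sq_right : IntervalIntegrable (fun t => (gr' x t)^2) volume 1 2 := by
  have h := ((int_gr'sq_left hderiv hx1 hL2).comp_sub_left 2).symm
  norm_num at h
  rw [intervalIntegrable_iff_integrableOn_Ioc_of_le (by norm_num)] at h ⊢
  refine h.congr_fun (fun t ht => ?_) measurableSet_Ioc
  simp [gr', show 2 - t ≤ 1 by linarith [ht.1], not_le.mpr ht.1]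

include hderiv hx1 hL2 in
theorem int_gr'sq : IntervalIntegrable (fun t => (gr' x t)^2) volume 0 2 :=
  (int_gr'sq_left hderiv hx1 hL2).trans (int_gr'sq_right hderiv hx1 hL2)

include hderiv hx1 hL2 in
theorem integral_gr'sq : (∫ t in (0:ℝ)..2, (gr' x t)^2) = 2 * ∫ t in (0:ℝ)..1, (x' t)^2 := by
  rw [← integral_add_adjacent_intervals (int_gr'sq_left hderiv hx1 hL2)
    (int_gr'sq_right hderiv hx1 hL2)]
  have h1 : (∫ t in (0:ℝ)..1, (gr' x t)^2) = ∫ t in (0:ℝ)..1, (x' t)^2 :=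
    integral_congr (fun t ht => by
      exact (gr'_eq_left hderiv hx1 hL2) (by rwa [uIcc_of_le (by norm_num)] at ht))
  have h2 : (∫ t in (1:ℝ)..2, (gr' x t)^2) = ∫ t in (0:ℝ)..1, (x' t)^2 := by
    have : (∫ t in (1:ℝ)..2, (gr' x t)^2) = ∫ t in (1:ℝ)..2, (fun s => (x' s)^2) (2 - t) := by
      refine integral_congr (fun t ht => ?_)
      rw [uIcc_of_le (by norm_num)] at ht
      have h2t : 2 - t ∈ Icc (0:ℝ) 1 := ⟨by linarith [ht.2], by linarith [ht.1]⟩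
      have hge : gr' x t = deriv x (2 - t) := by
        rcases eq_or_lt_of_le ht.1 with h | h
        · simp only [gr', ← h]; norm_num
        · simp [gr', not_le.mpr h]
      simp only [hge]
      rw [(hderiv _ h2t).deriv]
    rw [this, integral_comp_sub_left (fun s => (x' s)^2) 2]
    norm_num
  rw [h1, h2]; ring

include hderiv hx1 hL2 in
theorem int_g' : IntervalIntegrable (g' x) volume 0 2 := by
  have hb : IntervalIntegrable (fun t => (1 + (gr' x t)^2)/2) volume 0 2 :=
    ((((intervalIntegrable_const (μ := volume) (a:=(0:ℝ)) (b:=(2:ℝ))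
      (c := (1:ℝ)))).add (int_gr'sq hderiv hx1 hL2)).div_const 2)
  refine hb.mono_fun ((Complex.measurable_ofReal.comp (gr'_meas x)).aestronglyMeasurable) ?_
  refine Filter.Eventually.of_forall (fun t => ?_)
  have h1 : ‖g' x t‖ = |gr' x t| := by simp [g']
  have h2 : |gr' x t| ≤ (1 + (gr' x t)^2)/2 := by
    nlinarith [sq_nonneg (|gr' x t| - 1), abs_nonneg (gr' x t), _root_.sq_abs (gr' x t)]
  show ‖g' x t‖ ≤ ‖(1 + (gr' x t)^2)/2‖
  rw [h1]
  exact h2.trans (le_abs_self _)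

include hderiv hx1 in
theorem int_xsq : IntervalIntegrable (fun t => (x t)^2) volume 0 1 := by
  apply ContinuousOn.intervalIntegrable
  rw [uIcc_of_le (by norm_num)]
  exact (ContinuousOn.pow (fun t ht => ((hderiv t ht).continuousAt.continuousWithinAt)) 2)

include hderiv hx1 in
theorem int_x : IntervalIntegrable x volume 0 1 := by
  apply ContinuousOn.intervalIntegrable
  rw [uIcc_of_le (by norm_num)]
  exact fun t ht => (hderiv t ht).continuousAt.continuousWithinAt

include hderiv hx1 in
theorem int_grsq_left : IntervalIntegrable (fun t => (gr x t)^2) volume 0 1 := by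
  rw [intervalIntegrable_iff_integrableOn_Ioc_of_le (by norm_num)]
  refine ((intervalIntegrable_iff_integrableOn_Ioc_of_le (by norm_num)).mp
    (int_xsq hderiv hx1)).congr_fun (fun t ht => ?_) measurableSet_Ioc
  simp [gr, ht.2]

include hderiv hx1 in
theorem int_grsq_right : IntervalIntegrable (fun t => (gr x t)^2) volume 1 2 := by
  have h := ((int_grsq_left hderiv hx1).comp_sub_left 2).symm
  norm_num at h
  rw [intervalIntegrable_iff_integrableOn_Ioc_of_le (by norm_num)] at h ⊢
  refine h.congr_fun (fun t ht => ?_) measurableSet_Ioc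
  simp [gr, show 2 - t ≤ 1 by linarith [ht.1], not_le.mpr ht.1]

include hderiv hx1 in
theorem integral_grsq : (∫ t in (0:ℝ)..2, (gr x t)^2) = 2 * ∫ t in (0:ℝ)..1, (x t)^2 := by
  rw [← integral_add_adjacent_intervals (int_grsq_left hderiv hx1) (int_grsq_right hderiv hx1)]
  have h1 : (∫ t in (0:ℝ)..1, (gr x t)^2) = ∫ t in (0:ℝ)..1, (x t)^2 :=
    integral_congr (fun t ht => by
      rw [uIcc_of_le (by norm_num)] at ht
      simp [gr, ht.2])
  have h2 : (∫ t in (1:ℝ)..2, (gr x t)^2) = ∫ t in (0:ℝ)..1, (x t)^2 := by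
    have : (∫ t in (1:ℝ)..2, (gr x t)^2) = ∫ t in (1:ℝ)..2, (fun s => (x s)^2) (2 - t) := by
      refine integral_congr (fun t ht => ?_)
      rw [uIcc_of_le (by norm_num)] at ht
      rcases eq_or_lt_of_le ht.1 with h | h
      · simp only [gr, ← h]; norm_num [hx1]
      · simp [gr, not_le.mpr h]
    rw [this, integral_comp_sub_left (fun s => (x s)^2) 2]
    norm_num
  rw [h1, h2]; ring

include hderiv hx0 hx1 in
theorem integral_g_zero : (∫ t in (0:ℝ)..2, g x t) = 0 := by
  have : (∫ t in (0:ℝ)..2, g x t) = ((∫ t in (0:ℝ)..2, gr x t : ℝ) : ℂ) := integral_ofReal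
  rw [this]
  norm_cast
  have il : IntervalIntegrable (gr x) volume 0 1 := by
    rw [intervalIntegrable_iff_integrableOn_Ioc_of_le (by norm_num)]
    refine ((intervalIntegrable_iff_integrableOn_Ioc_of_le (by norm_num)).mp
      (int_x hderiv hx1)).congr_fun (fun t ht => ?_) measurableSet_Ioc
    simp [gr, ht.2]
  have ir : IntervalIntegrable (gr x) volume 1 2 := by
    have h := (il.comp_sub_left 2).symm
    norm_num at h
    rw [intervalIntegrable_iff_integrableOn_Ioc_of_le (by norm_num)] at h ⊢
    have hneg : IntegrableOn (fun t => -(gr x (2 - t))) (Ioc 1 2) volume := h.neg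
    refine (hneg.congr_fun (fun t ht => ?_) measurableSet_Ioc)
    simp [gr, show 2 - t ≤ 1 by linarith [ht.1], not_le.mpr ht.1]
  rw [← integral_add_adjacent_intervals il ir]
  have h1 : (∫ t in (0:ℝ)..1, gr x t) = ∫ t in (0:ℝ)..1, x t :=
    integral_congr (fun t ht => by
      rw [uIcc_of_le (by norm_num)] at ht
      simp [gr, ht.2])
  have h2 : (∫ t in (1:ℝ)..2, gr x t) = - ∫ t in (0:ℝ)..1, x t := by
    have : (∫ t in (1:ℝ)..2, gr x t) = ∫ t in (1:ℝ)..2, -(fun s => x s) (2 - t) := by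
      refine integral_congr (fun t ht => ?_)
      rw [uIcc_of_le (by norm_num)] at ht
      rcases eq_or_lt_of_le ht.1 with h | h
      · simp only [gr, ← h]; norm_num [hx1]
      · simp [gr, not_le.mpr h]
    rw [this, intervalIntegral.integral_neg, integral_comp_sub_left (fun s => x s) 2]
    norm_num
  rw [h1, h2]; ring

end main

theorem parseval_piece (f : ℝ → ℂ) (hmeas : Measurable (liftIoc 2 0 f))
    (hint : IntervalIntegrable (fun t => ‖f t‖^2) MeasureTheory.volume 0 2) :
    Summable (fun n : ℤ => ‖fourierCoeffOn h02 f n‖^2) ∧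
    ∑' n : ℤ, ‖fourierCoeffOn h02 f n‖^2
      = (1/2) * ∫ t in (0:ℝ)..2, ‖f t‖^2 := by
  set F := liftIoc 2 0 f with hF
  have hmk := AddCircle.measurePreserving_mk 2 0
  have hFf : ∀ t ∈ Ioc (0:ℝ) (0+2), F ↑t = f t := by
    intro t ht
    exact liftIoc_coe_apply ht
  have hF2m : Measurable fun z => ‖F z‖^2 := hmeas.norm.pow measurable_const
  have h2 : IntegrableOn (fun t : ℝ => ‖f t‖^2) (Ioc 0 (0+2)) volume := by
    have := (intervalIntegrable_iff_integrableOn_Ioc_of_le (by norm_num : (0:ℝ) ≤ 2)).mp hint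
    simpa using this
  have hintV : Integrable (fun z => ‖F z‖^2) (volume : Measure (AddCircle (2:ℝ))) := by
    rw [← hmk.integrable_comp hF2m.aestronglyMeasurable]
    exact h2.congr_fun (fun t ht => by simp only [Function.comp_apply, hFf t ht])
      measurableSet_Ioc
  have hintH : Integrable (fun z => ‖F z‖^2) (@haarAddCircle 2 _) := by
    have hv : Integrable (fun z => ‖F z‖^2) (ENNReal.ofReal 2 • (@haarAddCircle 2 _)) := by
      rw [← volume_eq_smul_haarAddCircle]; exact hintV
    exact (integrable_smul_measure (by norm_num) (by norm_num)).mp hv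
  have hmem : MemLp F 2 (@haarAddCircle 2 _) := by
    rw [memLp_two_iff_integrable_sq_norm hmeas.aestronglyMeasurable]
    exact hintH
  set FL : Lp ℂ 2 (@haarAddCircle 2 _) := hmem.toLp F with hFL
  have hae : ⇑FL =ᵐ[@haarAddCircle 2 _] F := hmem.coeFn_toLp
  have hcoeff : ∀ n : ℤ, fourierCoeff (⇑FL) n = fourierCoeffOn h02 f n := by
    intro n
    rw [← fourierCoeff_liftIoc_eq]
    unfold fourierCoeff
    refine integral_congr_ae ?_
    filter_upwards [hae] with z hz
    rw [hz]
  have hsum : Summable (fun n : ℤ => ‖fourierCoeffOn h02 f n‖^2) := by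
    have hmemlp := lp.memℓp (fourierBasis.repr FL)
    have := hmemlp.summable (by norm_num)
    simp only [fourierBasis_repr] at this
    refine Summable.congr this (fun n => ?_)
    rw [hcoeff n]
    norm_num [Real.rpow_natCast]
  refine ⟨hsum, ?_⟩
  have hpars := tsum_sq_fourierCoeff FL
  have hL : ∑' n : ℤ, ‖fourierCoeffOn h02 f n‖^2 = ∑' i : ℤ, ‖fourierCoeff (⇑FL) i‖ ^ 2 := by
    congr 1; ext n; rw [hcoeff n]
  rw [hL, hpars]
  have hR1 : ∫ z : AddCircle (2:ℝ), ‖FL z‖^2 ∂(@haarAddCircle 2 _)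
      = ∫ z : AddCircle (2:ℝ), ‖F z‖^2 ∂(@haarAddCircle 2 _) := by
    refine integral_congr_ae ?_
    filter_upwards [hae] with z hz
    rw [hz]
  have hR2 : ∫ z : AddCircle (2:ℝ), ‖F z‖^2 ∂(volume : Measure (AddCircle (2:ℝ)))
      = 2 * ∫ z : AddCircle (2:ℝ), ‖F z‖^2 ∂(@haarAddCircle 2 _) := by
    rw [volume_eq_smul_haarAddCircle, MeasureTheory.integral_smul_measure]
    norm_num
  have hR3 : ∫ z : AddCircle (2:ℝ), ‖F z‖^2 ∂(volume : Measure (AddCircle (2:ℝ)))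
      = ∫ t in (0:ℝ)..2, ‖f t‖^2 := by
    rw [← AddCircle.integral_preimage 2 0 (fun z => ‖F z‖^2),
      integral_of_le (by norm_num : (0:ℝ) ≤ 2)]
    have he : Ioc (0:ℝ) (0 + 2) = Ioc (0:ℝ) 2 := by norm_num
    rw [← he]
    exact setIntegral_congr_fun measurableSet_Ioc
      (fun t ht => by rw [hFf t ht])
  rw [hR1]
  have : ∫ z : AddCircle (2:ℝ), ‖F z‖^2 ∂(@haarAddCircle 2 _)
      = (1/2) * ∫ z : AddCircle (2:ℝ), ‖F z‖^2 ∂(volume : Measure (AddCircle (2:ℝ))) := by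
    rw [hR2]; ring
  rw [this, hR3]

theorem coeff_bound (n : ℤ) (hn : n ≠ 0) (c c' : ℂ)
    (h' : c = 1 / (-2 * ↑Real.pi * I * (n:ℂ)) * (-((2:ℂ) * c'))) :
    ‖c‖^2 ≤ (1 / Real.pi^2) * ‖c'‖^2 := by
  have hπ := Real.pi_pos
  have hn1 : (1:ℝ) ≤ |(n:ℝ)| := by
    rw [← Int.cast_abs]
    exact_mod_cast Int.one_le_abs hn
  have h1 : ‖c‖ = (1 / (2 * Real.pi * |(n:ℝ)|)) * (2 * ‖c'‖) := by
    rw [h', norm_mul, norm_div, norm_one, norm_neg, norm_mul, norm_mul, norm_mul, norm_mul]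
    simp only [Complex.norm_real, Complex.norm_intCast, Complex.norm_I,
      Complex.norm_ofNat, Real.norm_eq_abs]
    rw [abs_of_pos hπ]
    norm_num
  rw [h1]
  have hb : (1 / (2 * Real.pi * |(n:ℝ)|)) * (2 * ‖c'‖) = ‖c'‖ / (Real.pi * |(n:ℝ)|) := by
    field_simp
  rw [hb, div_pow, mul_pow]
  rw [div_le_iff₀ (by positivity), one_div, mul_comm ((Real.pi^2)⁻¹) _, mul_assoc]
  have : (Real.pi ^ 2)⁻¹ * (Real.pi ^ 2 * |(n:ℝ)| ^ 2) = |(n:ℝ)|^2 := by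
    field_simp
  rw [this]
  nlinarith [sq_nonneg ‖c'‖, norm_nonneg c', sq_nonneg (|(n:ℝ)| - 1)]

end Wirtinger

theorem stmt3 (x x' : ℝ → ℝ)
    (hderiv : ∀ t ∈ Icc (0:ℝ) 1, HasDerivAt x (x' t) t)
    (hx0 : x 0 = 0) (hx1 : x 1 = 0)
    (hL2 : IntervalIntegrable (fun t => (x' t)^2) MeasureTheory.volume 0 1) :
    (∫ t in (0:ℝ)..1, (x t)^2) ≤ (1 / Real.pi^2) * ∫ t in (0:ℝ)..1, (x' t)^2 := by
  classical
  have hgnorm : (fun t => ‖g x t‖^2) = fun t => (gr x t)^2 := by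
    funext t; simp [g, Complex.norm_real, _root_.sq_abs]
  have hg'norm : (fun t => ‖g' x t‖^2) = fun t => (gr' x t)^2 := by
    funext t; simp [g', Complex.norm_real, _root_.sq_abs]
  have hgmeas : Measurable (liftIoc 2 0 (g x)) :=
    liftIoc_meas_of_cont (key_cont hderiv hx1)
  have hg'meas : Measurable (liftIoc 2 0 (g' x)) :=
    liftIoc_meas_of_meas (Complex.measurable_ofReal.comp (gr'_meas x))
  have hgint : IntervalIntegrable (fun t => ‖g x t‖^2) MeasureTheory.volume 0 2 := by
    rw [hgnorm]
    exact (int_grsq_left hderiv hx1).trans (int_grsq_right hderiv hx1)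
  have hg'int : IntervalIntegrable (fun t => ‖g' x t‖^2) MeasureTheory.volume 0 2 := by
    rw [hg'norm]
    exact int_gr'sq hderiv hx1 hL2
  obtain ⟨hgsum, hgeq⟩ := parseval_piece (g x) hgmeas hgint
  obtain ⟨hg'sum, hg'eq⟩ := parseval_piece (g' x) hg'meas hg'int
  -- coefficient relation
  have hg02 : g x (0 + 2) = 0 := by
    have : ¬ ((0:ℝ) + 2 ≤ 1) := by norm_num
    simp only [g, gr, this, if_false]
    norm_num [hx0]
  have hg0 : g x 0 = 0 := by
    simp [g, gr, hx0]
  have hrel : ∀ n : ℤ, n ≠ 0 →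
      ‖fourierCoeffOn h02 (g x) n‖^2 ≤ (1 / Real.pi^2) * ‖fourierCoeffOn h02 (g' x) n‖^2 := by
    intro n hn
    have hcont : ContinuousOn (g x) (uIcc 0 (0+2)) := by
      rw [uIcc_of_le (by norm_num)]
      have he : Icc (0:ℝ) (0+2) = Icc (0:ℝ) 2 := by norm_num
      rw [he]
      exact key_cont hderiv hx1
    have hder : ∀ t ∈ Ioo (min (0:ℝ) (0+2)) (max (0:ℝ) (0+2)),
        HasDerivAt (g x) (g' x t) t := by
      intro t ht
      refine key_deriv hderiv hx1 t ?_
      have h1 : min (0:ℝ) (0+2) = 0 := by norm_num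
      have h2 : max (0:ℝ) (0+2) = 2 := by norm_num
      rw [h1, h2] at ht
      exact ht
    have hint : IntervalIntegrable (g' x) MeasureTheory.volume 0 (0+2) := by
      have he : (0:ℝ) + 2 = 2 := by norm_num
      rw [he]
      exact int_g' hderiv hx1 hL2
    have h := fourierCoeffOn_of_hasDerivAt_Ioo h02 hn hcont hder hint
    rw [hg02, hg0] at h
    have h2 : fourierCoeffOn h02 (g x) n
        = 1 / (-2 * ↑Real.pi * I * (n:ℂ)) * (-((2:ℂ) * fourierCoeffOn h02 (g' x) n)) := by
      rw [h]; push_cast; ring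
    exact coeff_bound n hn _ _ h2
  have hc0 : fourierCoeffOn h02 (g x) 0 = 0 := by
    rw [fourierCoeffOn_eq_integral]
    have he : (0:ℝ) + 2 = 2 := by norm_num
    rw [he]
    simp only [neg_zero, fourier_zero, one_smul]
    rw [integral_g_zero hderiv hx0 hx1]
    simp
  -- sum comparison
  have hsumle : ∑' n : ℤ, ‖fourierCoeffOn h02 (g x) n‖^2
      ≤ ∑' n : ℤ, (1 / Real.pi^2) * ‖fourierCoeffOn h02 (g' x) n‖^2 := by
    refine Summable.tsum_le_tsum (fun n => ?_) hgsum (hg'sum.mul_left _)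
    rcases eq_or_ne n 0 with h | h
    · subst h
      rw [hc0]
      simpa using (by positivity : (0:ℝ) ≤ 1 / Real.pi^2 * ‖fourierCoeffOn h02 (g' x) 0‖^2)
    · exact hrel n h
  have hfinal : ∑' n : ℤ, (1 / Real.pi^2) * ‖fourierCoeffOn h02 (g' x) n‖^2
      = (1 / Real.pi^2) * ((1/2) * ∫ t in (0:ℝ)..2, ‖g' x t‖^2) := by
    rw [tsum_mul_left, hg'eq]
  have e1 : (∫ t in (0:ℝ)..1, (x t)^2) = (1/2) * ∫ t in (0:ℝ)..2, ‖g x t‖^2 := by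
    rw [show (∫ t in (0:ℝ)..2, ‖g x t‖^2) = ∫ t in (0:ℝ)..2, (gr x t)^2 from by rw [hgnorm],
      integral_grsq hderiv hx1]
    ring
  have e2 : (1 / Real.pi^2) * ((1/2) * ∫ t in (0:ℝ)..2, ‖g' x t‖^2)
      = (1 / Real.pi^2) * ∫ t in (0:ℝ)..1, (x' t)^2 := by
    rw [show (∫ t in (0:ℝ)..2, ‖g' x t‖^2) = ∫ t in (0:ℝ)..2, (gr' x t)^2 from by rw [hg'norm],
      integral_gr'sq hderiv hx1 hL2]
    ring
  calc (∫ t in (0:ℝ)..1, (x t)^2)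
      = (1/2) * ∫ t in (0:ℝ)..2, ‖g x t‖^2 := e1
    _ = ∑' n : ℤ, ‖fourierCoeffOn h02 (g x) n‖^2 := hgeq.symm
    _ ≤ ∑' n : ℤ, (1 / Real.pi^2) * ‖fourierCoeffOn h02 (g' x) n‖^2 := hsumle
    _ = (1 / Real.pi^2) * ((1/2) * ∫ t in (0:ℝ)..2, ‖g' x t‖^2) := hfinal
    _ = (1 / Real.pi^2) * ∫ t in (0:ℝ)..1, (x' t)^2 := e2
end

section
/- Let n ∈ ℕ and x : {0,1,...,n} → ℝ with x(0) = x(n) = 0. Then max_{0 ≤ k ≤ n} |x(k)| ≤ (√(n+1)/2) (Σ_{k=1}^n |x(k)−x(k−1)|²)^{1/2}. -/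
open Finset

lemma tele8 (x : ℕ → ℝ) (a : ℕ) : ∀ b, a ≤ b →
    ∑ i ∈ Finset.Ioc a b, (x i - x (i-1)) = x b - x a := by
  intro b
  induction b with
  | zero => intro hb; interval_cases a; simp
  | succ b ih =>
    intro hb
    rcases Nat.lt_or_ge a (b+1) with h | h
    · have ha : a ≤ b := Nat.lt_succ_iff.mp h
      rw [← Finset.sum_Ioc_consecutive _ ha (Nat.le_succ b), ih ha]
      simp [Nat.Ioc_succ_singleton]
    · have : a = b + 1 := le_antisymm hb h
      subst this
      simp

theorem stmt8 (n : ℕ) (x : ℕ → ℝ) (hx0 : x 0 = 0) (hxn : x n = 0) :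
    ∀ k ≤ n, |x k| ≤ (Real.sqrt ((n:ℝ) + 1) / 2)
      * Real.sqrt (∑ k ∈ Finset.Icc 1 n, (x k - x (k-1))^2) := by
  intro k hk
  set S := ∑ k ∈ Finset.Icc 1 n, (x k - x (k-1))^2 with hSdef
  have hS0 : 0 ≤ S := Finset.sum_nonneg fun i _ => sq_nonneg _
  have key : (x k)^2 ≤ (((n:ℝ) + 1)/4) * S := by
    rcases Nat.eq_zero_or_pos n with hn | hn
    · subst hn
      interval_cases k
      rw [hx0]
      norm_num
      positivity
    · set A := ∑ i ∈ Finset.Ioc 0 k, (x i - x (i-1))^2 with hA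
      set B := ∑ i ∈ Finset.Ioc k n, (x i - x (i-1))^2 with hB
      have hAB : A + B = S := by
        rw [hA, hB, hSdef, Finset.sum_Ioc_consecutive _ (Nat.zero_le k) hk,
          ← Finset.Icc_add_one_left_eq_Ioc, zero_add]
      have hA0 : 0 ≤ A := Finset.sum_nonneg fun i _ => sq_nonneg _
      have hB0 : 0 ≤ B := Finset.sum_nonneg fun i _ => sq_nonneg _
      have h1 : (x k)^2 ≤ (k:ℝ) * A := by
        have := tele8 x 0 k (Nat.zero_le k)
        rw [hx0, sub_zero] at this
        calc (x k)^2 = (∑ i ∈ Finset.Ioc 0 k, (x i - x (i-1)))^2 := by rw [this]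
          _ ≤ (Finset.Ioc 0 k).card * A := sq_sum_le_card_mul_sum_sq
          _ = (k:ℝ) * A := by rw [Nat.card_Ioc]; norm_num
      have h2 : (x k)^2 ≤ ((n:ℝ) - k) * B := by
        have := tele8 x k n hk
        rw [hxn, zero_sub] at this
        calc (x k)^2 = (∑ i ∈ Finset.Ioc k n, (x i - x (i-1)))^2 := by
              rw [this]; ring
          _ ≤ (Finset.Ioc k n).card * B := sq_sum_le_card_mul_sum_sq
          _ = ((n:ℝ) - k) * B := by
              rw [Nat.card_Ioc, Nat.cast_sub hk]
      have hkn : (k:ℝ) ≤ (n:ℝ) := Nat.cast_le.mpr hk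
      have hk0 : (0:ℝ) ≤ (k:ℝ) := Nat.cast_nonneg k
      have hn1 : (1:ℝ) ≤ (n:ℝ) := by exact_mod_cast hn
      have hnpos : (0:ℝ) < (n:ℝ) := by exact_mod_cast hn
      rw [← hAB]
      have e0 : (0:ℝ) ≤ (n:ℝ)^2/4 - (k:ℝ)*((n:ℝ)-(k:ℝ)) := by
        nlinarith [sq_nonneg ((n:ℝ) - 2*(k:ℝ))]
      have e1 : (0:ℝ) ≤ ((n:ℝ)^2/4 - (k:ℝ)*((n:ℝ)-(k:ℝ))) * (A + B) :=
        mul_nonneg e0 (add_nonneg hA0 hB0)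
      have e2 : (0:ℝ) ≤ (n:ℝ) * (A + B) :=
        mul_nonneg (le_of_lt hnpos) (add_nonneg hA0 hB0)
      have h5 : (n:ℝ) * ((x k)^2) ≤ (n:ℝ) * (((n:ℝ)+1)/4 * (A + B)) := by
        nlinarith [mul_le_mul_of_nonneg_left h1 (sub_nonneg.mpr hkn),
          mul_le_mul_of_nonneg_left h2 hk0, e1, e2]
      exact (mul_le_mul_iff_of_pos_left hnpos).mp h5
  have hsqrt4 : Real.sqrt 4 = 2 := by
    rw [show (4:ℝ) = 2^2 by norm_num, Real.sqrt_sq (by norm_num : (0:ℝ) ≤ 2)]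
  calc |x k| = Real.sqrt ((x k)^2) := (Real.sqrt_sq_eq_abs _).symm
    _ ≤ Real.sqrt ((((n:ℝ) + 1)/4) * S) := Real.sqrt_le_sqrt key
    _ = Real.sqrt ((n:ℝ)+1) / 2 * Real.sqrt S := by
        rw [Real.sqrt_mul (by positivity), Real.sqrt_div (by positivity), hsqrt4]
end

section
/- Let n ≥ 2, c > 0, and let f : [0,1] × ℝ → ℝ be continuous, nondecreasing in x, with |f(t,0)| ≤ c for all t. Define F(t,x) = ∫₀ˣ f(t,s)ds and I(x) = Σ_{k=1}^n (1/2)|Δx(k−1)|² + (1/n²) Σ_{k=1}^{n−1} F(k/n, x(k)) on the space E of sequences x : {0,...,n} → ℝ with x(0)=x(n)=0. Then I(x) ≥ (1/2)‖x‖² − c (√(n−1)/n) ‖x‖ ≥ (1/2)‖x‖² − c‖x‖, where ‖x‖² = Σ_{k=1}^n |Δx(k−1)|². -/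
open Finset Set intervalIntegral

private lemma sum_Icc_one' (g : ℕ → ℝ) (n : ℕ) :
    ∑ k ∈ Finset.Icc 1 n, g k = ∑ i ∈ Finset.range n, g (i + 1) := by
  rw [← Finset.Ico_add_one_right_eq_Icc, Finset.sum_Ico_eq_sum_range]
  simp [add_comm]

theorem stmt9 (n : ℕ) (hn : 2 ≤ n) (c : ℝ) (hc : 0 < c)
    (f : ℝ → ℝ → ℝ) (hf : Continuous (Function.uncurry f))
    (hmono : ∀ t ∈ Set.Icc (0:ℝ) 1, Monotone (f t))
    (hbound : ∀ t ∈ Set.Icc (0:ℝ) 1, |f t 0| ≤ c)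
    (x : ℕ → ℝ) (hx0 : x 0 = 0) (hxn : x n = 0) :
    ((∑ k ∈ Finset.Icc 1 n, (1/2) * (x k - x (k-1))^2)
        + (1/(n:ℝ)^2) * ∑ k ∈ Finset.Icc 1 (n-1),
            (∫ s in (0:ℝ)..(x k), f ((k:ℝ)/n) s)
      ≥ (1/2) * (Real.sqrt (∑ k ∈ Finset.Icc 1 n, (x k - x (k-1))^2))^2
        - c * (Real.sqrt ((n:ℝ) - 1) / n)
          * Real.sqrt (∑ k ∈ Finset.Icc 1 n, (x k - x (k-1))^2))
    ∧ ((1/2) * (Real.sqrt (∑ k ∈ Finset.Icc 1 n, (x k - x (k-1))^2))^2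
        - c * (Real.sqrt ((n:ℝ) - 1) / n)
          * Real.sqrt (∑ k ∈ Finset.Icc 1 n, (x k - x (k-1))^2)
      ≥ (1/2) * (Real.sqrt (∑ k ∈ Finset.Icc 1 n, (x k - x (k-1))^2))^2
        - c * Real.sqrt (∑ k ∈ Finset.Icc 1 n, (x k - x (k-1))^2)) := by
  have hn1 : (1:ℝ) ≤ (n:ℝ) := by exact_mod_cast Nat.one_le_of_lt hn
  have hnR : (0:ℝ) < (n:ℝ) := by linarith
  set S := ∑ k ∈ Finset.Icc 1 n, (x k - x (k-1))^2 with hSdef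
  have hS0 : 0 ≤ S := Finset.sum_nonneg fun k _ => sq_nonneg _
  have hsq : (Real.sqrt S)^2 = S := Real.sq_sqrt hS0
  have h0s : 0 ≤ Real.sqrt S := Real.sqrt_nonneg _
  have h0n1 : 0 ≤ Real.sqrt ((n:ℝ)-1) := Real.sqrt_nonneg _
  have hA0 : 0 ≤ c * (Real.sqrt ((n:ℝ)-1) * Real.sqrt S) := by positivity
  -- S as a range sum
  have hSr : S = ∑ i ∈ Finset.range n, (x (i+1) - x i)^2 := by
    rw [hSdef, sum_Icc_one' (fun k => (x k - x (k-1))^2) n]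
    simp
  -- pointwise bound |x k| ≤ √(n-1)√S for 1 ≤ k ≤ n-1
  have hxk : ∀ k, 1 ≤ k → k ≤ n - 1 → |x k| ≤ Real.sqrt ((n:ℝ)-1) * Real.sqrt S := by
    intro k hk1 hk2
    have hkn : (k:ℝ) ≤ (n:ℝ) - 1 := by
      have : k + 1 ≤ n := by omega
      have : (k:ℝ) + 1 ≤ (n:ℝ) := by exact_mod_cast this
      linarith
    have hxel : x k = ∑ i ∈ Finset.range k, (x (i+1) - x i) := by
      rw [Finset.sum_range_sub, hx0, sub_zero]
    have h1 : |x k| ≤ ∑ i ∈ Finset.range k, |x (i+1) - x i| := by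
      rw [hxel]; exact Finset.abs_sum_le_sum_abs _ _
    have h2 : (∑ i ∈ Finset.range k, |x (i+1) - x i|)^2
        ≤ (k:ℝ) * ∑ i ∈ Finset.range k, (x (i+1) - x i)^2 := by
      have := Finset.sum_mul_sq_le_sq_mul_sq (Finset.range k) (fun _ => (1:ℝ))
        (fun i => |x (i+1) - x i|)
      simpa [sq_abs, Finset.card_range] using this
    have h3 : ∑ i ∈ Finset.range k, (x (i+1) - x i)^2 ≤ S := by
      rw [hSr]
      exact Finset.sum_le_sum_of_subset_of_nonneg
        (Finset.range_subset_range.mpr (by omega)) (fun i _ _ => sq_nonneg _)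
    have h4 : |x k|^2 ≤ ((n:ℝ)-1) * S := by
      have hsum0 : 0 ≤ ∑ i ∈ Finset.range k, |x (i+1) - x i| :=
        Finset.sum_nonneg fun i _ => abs_nonneg _
      have := pow_le_pow_left₀ (abs_nonneg (x k)) h1 2
      nlinarith [Finset.sum_nonneg (fun i (_ : i ∈ Finset.range k) => sq_nonneg (x (i+1) - x i))]
    calc |x k| = Real.sqrt (|x k|^2) := (Real.sqrt_sq (abs_nonneg _)).symm
      _ ≤ Real.sqrt (((n:ℝ)-1) * S) := Real.sqrt_le_sqrt h4
      _ = Real.sqrt ((n:ℝ)-1) * Real.sqrt S := Real.sqrt_mul (by linarith) _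
  -- integral lower bound
  have hFb : ∀ t ∈ Set.Icc (0:ℝ) 1, ∀ y : ℝ, -(c * |y|) ≤ ∫ s in (0:ℝ)..y, f t s := by
    intro t ht y
    have hcont : Continuous (f t) := hf.comp (Continuous.prodMk_right t)
    have hb := abs_le.mp (hbound t ht)
    rcases le_or_gt 0 y with hy | hy
    · have hmain : ∫ s in (0:ℝ)..y, (-c) ≤ ∫ s in (0:ℝ)..y, f t s := by
        apply intervalIntegral.integral_mono_on hy intervalIntegrable_const
          (hcont.intervalIntegrable _ _)
        intro s hs
        have := hmono t ht hs.1
        linarith [hb.1]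
      rw [intervalIntegral.integral_const, abs_of_nonneg hy] at *
      simp only [smul_eq_mul] at hmain
      linarith
    · have hsymm : ∫ s in (0:ℝ)..y, f t s = -∫ s in y..(0:ℝ), f t s :=
        intervalIntegral.integral_symm _ _
      have hmain : ∫ s in y..(0:ℝ), f t s ≤ ∫ s in y..(0:ℝ), c := by
        apply intervalIntegral.integral_mono_on hy.le
          (hcont.intervalIntegrable _ _) intervalIntegrable_const
        intro s hs
        have := hmono t ht hs.2
        linarith [hb.2]
      rw [intervalIntegral.integral_const] at hmain
      simp only [smul_eq_mul] at hmain
      rw [hsymm, abs_of_neg hy]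
      nlinarith
  constructor
  · -- main inequality
    have hsum1 : ∑ k ∈ Finset.Icc 1 n, (1/2)*(x k - x (k-1))^2 = (1/2)*S := by
      rw [hSdef, Finset.mul_sum]
    have hterm : ∀ k ∈ Finset.Icc 1 (n-1),
        -(c * (Real.sqrt ((n:ℝ)-1) * Real.sqrt S)) ≤ ∫ s in (0:ℝ)..(x k), f ((k:ℝ)/n) s := by
      intro k hk
      rw [Finset.mem_Icc] at hk
      have ht : (k:ℝ)/n ∈ Set.Icc (0:ℝ) 1 := by
        constructor
        · positivity
        · rw [div_le_one hnR]
          have : k ≤ n := by omega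
          exact_mod_cast this
      have h1 := hFb _ ht (x k)
      have h2 : c * |x k| ≤ c * (Real.sqrt ((n:ℝ)-1) * Real.sqrt S) :=
        mul_le_mul_of_nonneg_left (hxk k hk.1 hk.2) hc.le
      linarith
    have hcard : (Finset.Icc 1 (n-1)).card = n - 1 := by
      rw [Nat.card_Icc]; omega
    have hsumF : -(((n:ℝ)-1) * (c * (Real.sqrt ((n:ℝ)-1) * Real.sqrt S)))
        ≤ ∑ k ∈ Finset.Icc 1 (n-1), ∫ s in (0:ℝ)..(x k), f ((k:ℝ)/n) s := by
      calc -(((n:ℝ)-1) * (c * (Real.sqrt ((n:ℝ)-1) * Real.sqrt S)))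
          = ∑ _k ∈ Finset.Icc 1 (n-1), -(c * (Real.sqrt ((n:ℝ)-1) * Real.sqrt S)) := by
            rw [Finset.sum_const, hcard, nsmul_eq_mul]
            have : ((n-1 : ℕ) : ℝ) = (n:ℝ) - 1 := by
              have : 1 ≤ n := by omega
              push_cast [Nat.cast_sub this]
              ring
            rw [this]; ring
        _ ≤ _ := Finset.sum_le_sum hterm
    rw [hsum1, hsq]
    have key : (1/(n:ℝ)^2) * ∑ k ∈ Finset.Icc 1 (n-1), (∫ s in (0:ℝ)..(x k), f ((k:ℝ)/n) s)
        ≥ - (c * (Real.sqrt ((n:ℝ)-1) / n) * Real.sqrt S) := by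
      have hfrac : ((n:ℝ)-1) / (n:ℝ)^2 ≤ 1 / n := by
        rw [div_le_div_iff₀ (by positivity) hnR]
        nlinarith
      have h1 : (1/(n:ℝ)^2) * ∑ k ∈ Finset.Icc 1 (n-1), (∫ s in (0:ℝ)..(x k), f ((k:ℝ)/n) s)
          ≥ (1/(n:ℝ)^2) * (-(((n:ℝ)-1) * (c * (Real.sqrt ((n:ℝ)-1) * Real.sqrt S)))) :=
        mul_le_mul_of_nonneg_left hsumF (by positivity)
      have h2 : (1/(n:ℝ)^2) * (-(((n:ℝ)-1) * (c * (Real.sqrt ((n:ℝ)-1) * Real.sqrt S))))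
          ≥ - (c * (Real.sqrt ((n:ℝ)-1) / n) * Real.sqrt S) := by
        have h := mul_le_mul_of_nonneg_right hfrac hA0
        have e1 : (1/(n:ℝ)^2) * (-(((n:ℝ)-1) * (c * (Real.sqrt ((n:ℝ)-1) * Real.sqrt S))))
            = -((((n:ℝ)-1)/(n:ℝ)^2) * (c * (Real.sqrt ((n:ℝ)-1) * Real.sqrt S))) := by ring
        have e2 : c * (Real.sqrt ((n:ℝ)-1) / n) * Real.sqrt S
            = (1/(n:ℝ)) * (c * (Real.sqrt ((n:ℝ)-1) * Real.sqrt S)) := by ring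
        rw [ge_iff_le, e1, e2]
        exact neg_le_neg h
      linarith
    linarith
  · -- second inequality
    have hsqrtle : Real.sqrt ((n:ℝ)-1) ≤ (n:ℝ) := by
      have h1 : Real.sqrt ((n:ℝ)-1) ≤ Real.sqrt ((n:ℝ)^2) :=
        Real.sqrt_le_sqrt (by nlinarith)
      rwa [Real.sqrt_sq hnR.le] at h1
    have : c * (Real.sqrt ((n:ℝ)-1) / n) * Real.sqrt S ≤ c * Real.sqrt S := by
      have hd : Real.sqrt ((n:ℝ)-1) / n ≤ 1 := by
        rw [div_le_one hnR]; exact hsqrtle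
      calc c * (Real.sqrt ((n:ℝ)-1) / n) * Real.sqrt S
          = (Real.sqrt ((n:ℝ)-1) / n) * (c * Real.sqrt S) := by ring
        _ ≤ 1 * (c * Real.sqrt S) := mul_le_mul_of_nonneg_right hd (by positivity)
        _ = c * Real.sqrt S := by ring
    linarith
end

section
/- Let n ≥ 2, c > 0, f as above (continuous, nondecreasing in x, |f(t,0)| ≤ c), and suppose x^n minimizes I on E with I(x^n) ≤ I(0) = 0, where I(x) = Σ_{k=1}^n (1/2)|Δx(k−1)|² + (1/n²)Σ_{k=1}^{n−1} F(k/n,x(k)). Then ‖x^n‖ ≤ 2c√(n−1)/n, and consequently |x^n(k)| ≤ c for all k ∈ {0,...,n}. -/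
open Finset Set intervalIntegral

set_option maxHeartbeats 1000000

theorem stmt10 (n : ℕ) (hn : 2 ≤ n) (c : ℝ) (hc : 0 < c)
    (f : ℝ → ℝ → ℝ) (hf : Continuous (Function.uncurry f))
    (hmono : ∀ t ∈ Set.Icc (0:ℝ) 1, Monotone (f t))
    (hbound : ∀ t ∈ Set.Icc (0:ℝ) 1, |f t 0| ≤ c)
    (I : (ℕ → ℝ) → ℝ)
    (hI : ∀ x : ℕ → ℝ, I x = (∑ k ∈ Finset.Icc 1 n, (1/2) * (x k - x (k-1))^2)
        + (1/(n:ℝ)^2) * ∑ k ∈ Finset.Icc 1 (n-1),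
            (∫ s in (0:ℝ)..(x k), f ((k:ℝ)/n) s))
    (xn : ℕ → ℝ) (hx0 : xn 0 = 0) (hxn : xn n = 0)
    (hmin : ∀ y : ℕ → ℝ, y 0 = 0 → y n = 0 → I xn ≤ I y)
    (hle : I xn ≤ I (fun _ => 0)) :
    Real.sqrt (∑ k ∈ Finset.Icc 1 n, (xn k - xn (k-1))^2)
        ≤ 2 * c * Real.sqrt ((n:ℝ) - 1) / n
    ∧ ∀ k ≤ n, |xn k| ≤ c := by
  have hn0 : (0:ℝ) < n := by
    have : (0:ℕ) < n := by omega
    exact_mod_cast this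
  have hn1 : (1:ℝ) ≤ n := by exact_mod_cast (by omega : 1 ≤ n)
  set S : ℝ := ∑ k ∈ Finset.Icc 1 n, (xn k - xn (k-1))^2 with hSdef
  have hSnn : 0 ≤ S := Finset.sum_nonneg fun _ _ => sq_nonneg _
  have hIcc : ∀ m : ℕ, Finset.Icc 1 m = Finset.Ioc 0 m := fun m => Finset.Icc_add_one_left_eq_Ioc 0 m
  -- telescoping
  have tel : ∀ k : ℕ, xn k = ∑ j ∈ Finset.Ioc 0 k, (xn j - xn (j-1)) := by
    intro k
    induction k with
    | zero => simpa using hx0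
    | succ k ih =>
      rw [Finset.sum_Ioc_succ_top (Nat.zero_le k), ← ih, Nat.add_sub_cancel]
      ring
  -- Cauchy-Schwarz on Ioc a b
  have cs : ∀ a b : ℕ, (∑ j ∈ Finset.Ioc a b, (xn j - xn (j-1)))^2
      ≤ ((b - a : ℕ) : ℝ) * ∑ j ∈ Finset.Ioc a b, (xn j - xn (j-1))^2 := by
    intro a b
    have h := Finset.sum_mul_sq_le_sq_mul_sq (Finset.Ioc a b)
      (fun j => xn j - xn (j-1)) (fun _ => (1:ℝ))
    simp only [mul_one, one_pow, Finset.sum_const, nsmul_eq_mul] at h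
    rw [Nat.card_Ioc] at h
    calc (∑ j ∈ Finset.Ioc a b, (xn j - xn (j-1)))^2
        ≤ (∑ j ∈ Finset.Ioc a b, (xn j - xn (j-1))^2) * ((b - a : ℕ) : ℝ) := h
      _ = ((b - a : ℕ) : ℝ) * ∑ j ∈ Finset.Ioc a b, (xn j - xn (j-1))^2 := mul_comm _ _
  -- partial sums of squares bounded by S
  have part : ∀ k ≤ n, (∑ j ∈ Finset.Ioc 0 k, (xn j - xn (j-1))^2) ≤ S := by
    intro k hk
    rw [hSdef, hIcc]
    exact Finset.sum_le_sum_of_subset_of_nonneg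
      (Finset.Ioc_subset_Ioc le_rfl hk) (fun _ _ _ => sq_nonneg _)
  -- square bound for xn k, front version
  have sqfront : ∀ k ≤ n, (xn k)^2 ≤ (k : ℝ) * S := by
    intro k hk
    rw [tel k]
    calc (∑ j ∈ Finset.Ioc 0 k, (xn j - xn (j-1)))^2
        ≤ ((k - 0 : ℕ) : ℝ) * ∑ j ∈ Finset.Ioc 0 k, (xn j - xn (j-1))^2 := cs 0 k
      _ ≤ (k : ℝ) * S := by
          simp only [Nat.sub_zero]
          exact mul_le_mul_of_nonneg_left (part k hk) (by positivity)
  -- back version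
  have back : ∀ k ≤ n, xn k = -∑ j ∈ Finset.Ioc k n, (xn j - xn (j-1)) := by
    intro k hk
    have h := Finset.sum_Ioc_consecutive (fun j => xn j - xn (j-1)) (Nat.zero_le k) hk
    have h2 : xn k + ∑ j ∈ Finset.Ioc k n, (xn j - xn (j-1)) = xn n := by
      rw [tel k, h, ← tel n]
    rw [hxn] at h2
    linarith
  have sqback : ∀ k ≤ n, (xn k)^2 ≤ ((n - k : ℕ) : ℝ) * S := by
    intro k hk
    rw [back k hk, neg_sq]
    calc (∑ j ∈ Finset.Ioc k n, (xn j - xn (j-1)))^2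
        ≤ ((n - k : ℕ) : ℝ) * ∑ j ∈ Finset.Ioc k n, (xn j - xn (j-1))^2 := cs k n
      _ ≤ ((n - k : ℕ) : ℝ) * S := by
          apply mul_le_mul_of_nonneg_left _ (by positivity)
          rw [hSdef, hIcc]
          exact Finset.sum_le_sum_of_subset_of_nonneg
            (Finset.Ioc_subset_Ioc (Nat.zero_le k) le_rfl) (fun _ _ _ => sq_nonneg _)
  -- integral lower bound
  have intlb : ∀ k ∈ Finset.Icc 1 (n-1),
      -(c * |xn k|) ≤ ∫ s in (0:ℝ)..(xn k), f ((k:ℝ)/n) s := by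
    intro k hk
    obtain ⟨hk1, hk2⟩ := Finset.mem_Icc.mp hk
    have hkn : k ≤ n := by omega
    set t : ℝ := (k:ℝ)/n with htdef
    have ht : t ∈ Set.Icc (0:ℝ) 1 := by
      constructor
      · positivity
      · rw [htdef, div_le_one hn0]
        exact_mod_cast hkn
    have hcont : Continuous (f t) := hf.comp (Continuous.prodMk_right t)
    have hb := abs_le.mp (hbound t ht)
    rcases le_or_gt 0 (xn k) with hy | hy
    · have h := intervalIntegral.integral_mono_on (μ := MeasureTheory.volume) hy
        ((continuous_const (y := -c)).intervalIntegrable 0 (xn k)) (hcont.intervalIntegrable 0 (xn k))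
        (fun s hs => by
          have h1 : f t 0 ≤ f t s := hmono t ht hs.1
          linarith [hb.1])
      rw [intervalIntegral.integral_const, sub_zero, smul_eq_mul] at h
      rw [abs_of_nonneg hy]
      nlinarith [h]
    · rw [intervalIntegral.integral_symm]
      have h := intervalIntegral.integral_mono_on (μ := MeasureTheory.volume) hy.le
        (hcont.intervalIntegrable (xn k) 0) ((continuous_const (y := c)).intervalIntegrable (xn k) 0)
        (fun s hs => by
          have h1 : f t s ≤ f t 0 := hmono t ht hs.2
          linarith [hb.2])
      rw [intervalIntegral.integral_const, zero_sub, smul_eq_mul] at h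
      rw [abs_of_neg hy]
      nlinarith [h]
  -- I of zero is zero
  have hI0 : I (fun _ => 0) = 0 := by
    rw [hI]; simp
  rw [hI0, hI xn] at hle
  set r : ℝ := Real.sqrt ((n:ℝ) - 1) with hrdef
  have hrnn : 0 ≤ r := Real.sqrt_nonneg _
  have hr2 : r^2 = (n:ℝ) - 1 := Real.sq_sqrt (by linarith)
  set s : ℝ := Real.sqrt S with hsdef
  have hsnn : 0 ≤ s := Real.sqrt_nonneg _
  have hs2 : s^2 = S := Real.sq_sqrt hSnn
  -- bound |xn k| for k in Icc 1 (n-1)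
  have absb : ∀ k ∈ Finset.Icc 1 (n-1), |xn k| ≤ r * s := by
    intro k hk
    obtain ⟨hk1, hk2⟩ := Finset.mem_Icc.mp hk
    have hkn : k ≤ n := by omega
    have hkr : (k:ℝ) ≤ (n:ℝ) - 1 := by
      have : (k:ℝ) + 1 ≤ n := by exact_mod_cast (by omega : k + 1 ≤ n)
      linarith
    have h1 : (xn k)^2 ≤ ((n:ℝ) - 1) * S :=
      le_trans (sqfront k hkn) (mul_le_mul_of_nonneg_right hkr hSnn)
    have h2 : ((n:ℝ) - 1) * S = (r * s)^2 := by rw [mul_pow, hr2, hs2]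
    rw [h2] at h1
    exact abs_le.mpr (abs_le_of_sq_le_sq' h1 (by positivity))
  -- sum of integrals lower bound
  have sumlb : -(((n:ℝ) - 1) * (c * (r * s)))
      ≤ ∑ k ∈ Finset.Icc 1 (n-1), ∫ x in (0:ℝ)..(xn k), f ((k:ℝ)/n) x := by
    have h1 : ∑ k ∈ Finset.Icc 1 (n-1), -(c * |xn k|)
        ≤ ∑ k ∈ Finset.Icc 1 (n-1), ∫ x in (0:ℝ)..(xn k), f ((k:ℝ)/n) x :=
      Finset.sum_le_sum intlb
    refine le_trans ?_ h1
    have h2 : ∀ k ∈ Finset.Icc 1 (n-1), -(c * (r * s)) ≤ -(c * |xn k|) := by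
      intro k hk
      have h3 : c * |xn k| ≤ c * (r * s) := mul_le_mul_of_nonneg_left (absb k hk) hc.le
      linarith
    calc -(((n:ℝ) - 1) * (c * (r * s)))
        ≤ -((Finset.Icc 1 (n-1)).card : ℝ) * (c * (r * s)) := by
          have hcard : ((Finset.Icc 1 (n-1)).card : ℝ) ≤ (n:ℝ) - 1 := by
            rw [Nat.card_Icc]
            have he : (n - 1 + 1 - 1 : ℕ) = n - 1 := by omega
            rw [he]
            have : ((n-1:ℕ):ℝ) ≤ (n:ℝ) - 1 := by
              rw [Nat.cast_sub (by omega)]; simp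
            linarith
          have hcrs : 0 ≤ c * (r * s) := by positivity
          nlinarith
      _ = ∑ k ∈ Finset.Icc 1 (n-1), -(c * (r * s)) := by
          rw [Finset.sum_const, nsmul_eq_mul]; ring
      _ ≤ ∑ k ∈ Finset.Icc 1 (n-1), -(c * |xn k|) := Finset.sum_le_sum h2
  -- half sum equals S/2
  have hhalf : (∑ k ∈ Finset.Icc 1 n, (1/2) * (xn k - xn (k-1))^2) = S / 2 := by
    rw [hSdef, ← Finset.mul_sum]; ring
  rw [hhalf] at hle
  have key : S / 2 ≤ (1/(n:ℝ)^2) * (((n:ℝ) - 1) * (c * (r * s))) := by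
    have hpos : (0:ℝ) < 1/(n:ℝ)^2 := by positivity
    nlinarith [mul_le_mul_of_nonneg_left sumlb hpos.le]
  have hnormb : s ≤ 2 * c * r / n := by
    have hn2 : (0:ℝ) < (n:ℝ)^2 := by positivity
    have hr2n : r^2 ≤ (n:ℝ) := by rw [hr2]; linarith
    have hss : s * s = S := by rw [← hs2]; ring
    rcases eq_or_lt_of_le hsnn with h0 | h0
    · rw [← h0]; positivity
    · rw [le_div_iff₀ hn0]
      have key2 : S / 2 * (n:ℝ)^2 ≤ ((n:ℝ) - 1) * (c * (r * s)) := by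
        rw [← le_div_iff₀ hn2]
        calc S/2 ≤ (1/(n:ℝ)^2) * (((n:ℝ) - 1) * (c * (r * s))) := key
          _ = (((n:ℝ) - 1) * (c * (r * s))) / (n:ℝ)^2 := by ring
      have hcrs : 0 ≤ c * (r * s) := by positivity
      have key3 : (n:ℝ)^2 * S ≤ 2 * c * r * s * n := by nlinarith [key2, hcrs]
      have key4 : (n:ℝ) * (s * s) ≤ 2 * c * r * s :=
        le_of_mul_le_mul_left (by nlinarith [key3, hss]) hn0
      exact le_of_mul_le_mul_right (by nlinarith [key4] : s * (n:ℝ) * s ≤ 2 * c * r * s) h0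
  refine ⟨hnormb, ?_⟩
  have hSb : S ≤ (2 * c * r / n)^2 := by
    have h := mul_self_le_mul_self hsnn hnormb
    nlinarith [hs2, h]
  intro k hk
  rcases Nat.eq_zero_or_pos k with rfl | hk0
  · rw [hx0, abs_zero]; exact hc.le
  rcases eq_or_lt_of_le hk with rfl | hklt
  · rw [hxn, abs_zero]; exact hc.le
  have hf1 := sqfront k hk
  have hf2 := sqback k hk
  have hcast : ((n - k : ℕ) : ℝ) = (n:ℝ) - k := by
    rw [Nat.cast_sub hk]
  rw [hcast] at hf2
  have hkR : (1:ℝ) ≤ (k:ℝ) := by exact_mod_cast hk0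
  have hknR : (k:ℝ) ≤ (n:ℝ) - 1 := by
    have : (k:ℝ) + 1 ≤ n := by exact_mod_cast hklt
    linarith
  have hA : (xn k)^2 ≤ (k:ℝ) * ∑ j ∈ Finset.Ioc 0 k, (xn j - xn (j-1))^2 := by
    rw [tel k]; simpa using cs 0 k
  have hB : (xn k)^2 ≤ ((n:ℝ) - (k:ℝ)) * ∑ j ∈ Finset.Ioc k n, (xn j - xn (j-1))^2 := by
    rw [back k hk, neg_sq, ← hcast]
    exact cs k n
  have hAB : (∑ j ∈ Finset.Ioc 0 k, (xn j - xn (j-1))^2)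
      + (∑ j ∈ Finset.Ioc k n, (xn j - xn (j-1))^2) = S := by
    rw [hSdef, hIcc]
    exact Finset.sum_Ioc_consecutive _ (Nat.zero_le k) hk
  have hAnn : (0:ℝ) ≤ ∑ j ∈ Finset.Ioc 0 k, (xn j - xn (j-1))^2 :=
    Finset.sum_nonneg fun _ _ => sq_nonneg _
  have hBnn : (0:ℝ) ≤ ∑ j ∈ Finset.Ioc k n, (xn j - xn (j-1))^2 :=
    Finset.sum_nonneg fun _ _ => sq_nonneg _
  have hquarter : (n:ℝ) * (xn k)^2 ≤ ((n:ℝ)^2/4) * S := by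
    have h2 := mul_le_mul_of_nonneg_left hA (by linarith : (0:ℝ) ≤ (n:ℝ) - k)
    have h3 := mul_le_mul_of_nonneg_left hB (by linarith : (0:ℝ) ≤ (k:ℝ))
    have h4 : (k:ℝ) * ((n:ℝ) - k) ≤ (n:ℝ)^2/4 := by nlinarith [sq_nonneg (2*(k:ℝ) - n)]
    nlinarith [h2, h3, h4, hAnn, hBnn, hSnn, sq_nonneg (xn k), hAB]
  have hsq : (xn k)^2 ≤ c^2 := by
    have hne : (n:ℝ) ≠ 0 := hn0.ne'
    have e : (2 * c * r / n)^2 = 4 * c^2 * ((n:ℝ)-1) / (n:ℝ)^2 := by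
      rw [div_pow, mul_pow, mul_pow, hr2]; ring
    have hb2 : S ≤ 4 * c^2 * ((n:ℝ)-1) / (n:ℝ)^2 := by linarith [hSb, e]
    have h5 : ((n:ℝ)^2/4) * S ≤ c^2 * ((n:ℝ) - 1) := by
      calc ((n:ℝ)^2/4) * S ≤ ((n:ℝ)^2/4) * (4 * c^2 * ((n:ℝ)-1) / (n:ℝ)^2) :=
            mul_le_mul_of_nonneg_left hb2 (by positivity)
        _ = c^2 * ((n:ℝ) - 1) := by field_simp
    have h6 : (n:ℝ) * (xn k)^2 ≤ c^2 * (n:ℝ) := by nlinarith [hquarter, h5, sq_nonneg c]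
    nlinarith [h6, hn0]
  exact abs_le.mpr (abs_le_of_sq_le_sq' hsq hc.le)
end

section
/- Let n ≥ 2, a, b > 0, γ ∈ [0,1), and suppose F : [0,1] × ℝ → ℝ satisfies F(t,x) ≥ −a|x| − (b/(γ+1))|x|^{γ+1}. Then the functional I(x) = Σ_{k=1}^n (1/2)|Δx(k−1)|² + (1/n²)Σ_{k=1}^{n−1} F(k/n, x(k)) on sequences x with x(0)=x(n)=0 satisfies I(x) ≥ (1/2)‖x‖² − a(√(n−1)/n)‖x‖ − (b/(γ+1)) n^{(γ−1)/2} ‖x‖^{γ+1}, where ‖x‖² = Σ_{k=1}^n |Δx(k−1)|². -/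
set_option maxHeartbeats 1000000


open Finset

theorem stmt14 (n : ℕ) (hn : 2 ≤ n) (a b : ℝ) (ha : 0 < a) (hb : 0 < b)
    (γ : ℝ) (hγ : γ ∈ Set.Ico (0:ℝ) 1)
    (F : ℝ → ℝ → ℝ)
    (hF : ∀ t ∈ Set.Icc (0:ℝ) 1, ∀ x : ℝ,
      F t x ≥ -a * |x| - (b/(γ+1)) * |x| ^ (γ+1))
    (x : ℕ → ℝ) (hx0 : x 0 = 0) (hxn : x n = 0) :
    (∑ k ∈ Finset.Icc 1 n, (1/2) * (x k - x (k-1))^2)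
        + (1/(n:ℝ)^2) * ∑ k ∈ Finset.Icc 1 (n-1), F ((k:ℝ)/n) (x k)
      ≥ (1/2) * (Real.sqrt (∑ k ∈ Finset.Icc 1 n, (x k - x (k-1))^2))^2
        - a * (Real.sqrt ((n:ℝ) - 1) / n)
          * Real.sqrt (∑ k ∈ Finset.Icc 1 n, (x k - x (k-1))^2)
        - (b/(γ+1)) * (n:ℝ) ^ ((γ - 1)/2)
          * (Real.sqrt (∑ k ∈ Finset.Icc 1 n, (x k - x (k-1))^2)) ^ (γ+1) := by
  obtain ⟨hγ0, hγ1⟩ := hγ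
  have hγ1' : (0:ℝ) < γ + 1 := by linarith
  set c := b / (γ + 1) with hc
  have hcpos : 0 < c := div_pos hb hγ1'
  set S := ∑ k ∈ Finset.Icc 1 n, (x k - x (k-1))^2 with hSdef
  have hSnn : 0 ≤ S := Finset.sum_nonneg fun _ _ => sq_nonneg _
  set u := Real.sqrt S with hu
  have hun : 0 ≤ u := Real.sqrt_nonneg _
  have hsq : u ^ 2 = S := Real.sq_sqrt hSnn
  have hn0 : (0:ℝ) < n := by positivity
  have hn1 : (1:ℝ) ≤ (n:ℝ) := by exact_mod_cast Nat.one_le_of_lt hn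
  have hn1' : (0:ℝ) ≤ (n:ℝ) - 1 := by linarith
  -- telescoping
  have tel : ∀ k, ∑ j ∈ Finset.Icc 1 k, (x j - x (j-1)) = x k := by
    intro k
    induction k with
    | zero => simp [hx0]
    | succ m ih =>
      rw [Finset.sum_Icc_succ_top (Nat.one_le_iff_ne_zero.mpr (Nat.succ_ne_zero m)), ih]
      simp
  set M := Real.sqrt n * u with hM
  have hMnn : 0 ≤ M := mul_nonneg (Real.sqrt_nonneg _) hun
  -- pointwise bound
  have hxk : ∀ k ∈ Finset.Icc 1 (n-1), |x k| ≤ M := by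
    intro k hk
    simp only [Finset.mem_Icc] at hk
    have hkn : k ≤ n := le_trans hk.2 (Nat.sub_le n 1)
    have h1 : |x k| ≤ ∑ j ∈ Finset.Icc 1 k, |x j - x (j-1)| := by
      rw [← tel k]; exact Finset.abs_sum_le_sum_abs _ _
    have h2 : (∑ j ∈ Finset.Icc 1 k, |x j - x (j-1)|)^2
        ≤ (k:ℝ) * ∑ j ∈ Finset.Icc 1 k, (x j - x (j-1))^2 := by
      have := sq_sum_le_card_mul_sum_sq (s := Finset.Icc 1 k)
        (f := fun j => |x j - x (j-1)|)
      simpa [Nat.card_Icc, sq_abs] using this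
    have h3 : ∑ j ∈ Finset.Icc 1 k, (x j - x (j-1))^2 ≤ S := by
      apply Finset.sum_le_sum_of_subset_of_nonneg
      · exact Finset.Icc_subset_Icc_right hkn
      · intro _ _ _; exact sq_nonneg _
    have h4 : |x k| ^ 2 ≤ (n:ℝ) * S := by
      have hk' : (k:ℝ) ≤ (n:ℝ) := by exact_mod_cast hkn
      have := pow_le_pow_left₀ (abs_nonneg _) h1 2
      nlinarith [Finset.sum_nonneg (fun j (_ : j ∈ Finset.Icc 1 k) =>
        sq_nonneg (x j - x (j-1)))]
    have h5 : M ^ 2 = (n:ℝ) * S := by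
      rw [hM, mul_pow, Real.sq_sqrt hn0.le, hsq]
    nlinarith [abs_nonneg (x k)]
  -- bound on the sum of F
  have hmemIcc : ∀ k ∈ Finset.Icc 1 (n-1), ((k:ℝ)/n) ∈ Set.Icc (0:ℝ) 1 := by
    intro k hk
    simp only [Finset.mem_Icc] at hk
    constructor
    · positivity
    · rw [div_le_one hn0]
      exact_mod_cast le_trans hk.2 (Nat.sub_le n 1)
  have hT : ∑ k ∈ Finset.Icc 1 (n-1), (-a * M - c * M ^ (γ+1))
      ≤ ∑ k ∈ Finset.Icc 1 (n-1), F ((k:ℝ)/n) (x k) := by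
    apply Finset.sum_le_sum
    intro k hk
    have h1 := hF _ (hmemIcc k hk) (x k)
    have h2 : |x k| ≤ M := hxk k hk
    have h3 : |x k| ^ (γ+1) ≤ M ^ (γ+1) :=
      Real.rpow_le_rpow (abs_nonneg _) h2 hγ1'.le
    have h4 : a * |x k| ≤ a * M := mul_le_mul_of_nonneg_left h2 ha.le
    have h5 : c * |x k| ^ (γ+1) ≤ c * M ^ (γ+1) :=
      mul_le_mul_of_nonneg_left h3 hcpos.le
    linarith
  have hcard : ((Finset.Icc 1 (n-1)).card : ℝ) = (n:ℝ) - 1 := by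
    rw [Nat.card_Icc]
    have : n - 1 + 1 - 1 = n - 1 := by omega
    rw [this, Nat.cast_sub (by omega)]
    simp
  have hTsum : ((n:ℝ) - 1) * (-a * M - c * M ^ (γ+1))
      ≤ ∑ k ∈ Finset.Icc 1 (n-1), F ((k:ℝ)/n) (x k) := by
    calc ((n:ℝ) - 1) * (-a * M - c * M ^ (γ+1))
        = ∑ k ∈ Finset.Icc 1 (n-1), (-a * M - c * M ^ (γ+1)) := by
          rw [Finset.sum_const, nsmul_eq_mul, hcard]
      _ ≤ _ := hT
  -- rpow computations
  have hMr : M ^ (γ+1) = (n:ℝ) ^ ((γ+1)/2) * u ^ (γ+1) := by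
    rw [hM, Real.mul_rpow (Real.sqrt_nonneg _) hun, Real.sqrt_eq_rpow,
      ← Real.rpow_mul hn0.le, show (1/2:ℝ)*(γ+1) = (γ+1)/2 by ring]
  set Q := u ^ (γ+1) with hQ
  have hQnn : 0 ≤ Q := Real.rpow_nonneg hun _
  -- key scalar inequalities
  have hA : ((n:ℝ)-1) * Real.sqrt n / (n:ℝ)^2 ≤ Real.sqrt ((n:ℝ)-1) / n := by
    have h1 : Real.sqrt ((n:ℝ)-1) ≤ Real.sqrt n := Real.sqrt_le_sqrt (by linarith)
    have key : ((n:ℝ)-1) * Real.sqrt n ≤ (n:ℝ) * Real.sqrt ((n:ℝ)-1) := by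
      have e1 : ((n:ℝ)-1) * Real.sqrt n
          = Real.sqrt ((n:ℝ)-1) * (Real.sqrt ((n:ℝ)-1) * Real.sqrt n) := by
        linear_combination Real.sqrt (n:ℝ) * (Real.mul_self_sqrt hn1').symm
      have e2 : (n:ℝ) * Real.sqrt ((n:ℝ)-1)
          = Real.sqrt ((n:ℝ)-1) * (Real.sqrt (n:ℝ) * Real.sqrt (n:ℝ)) := by
        linear_combination Real.sqrt ((n:ℝ)-1) * (Real.mul_self_sqrt hn0.le).symm
      rw [e1, e2]
      exact mul_le_mul_of_nonneg_left
        (mul_le_mul_of_nonneg_right h1 (Real.sqrt_nonneg _)) (Real.sqrt_nonneg _)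
    calc ((n:ℝ)-1) * Real.sqrt n / (n:ℝ)^2
        ≤ (n:ℝ) * Real.sqrt ((n:ℝ)-1) / (n:ℝ)^2 := by gcongr
      _ = Real.sqrt ((n:ℝ)-1) / n := by field_simp
  have hB : ((n:ℝ)-1) * (n:ℝ)^((γ+1)/2) / (n:ℝ)^2 ≤ (n:ℝ)^((γ-1)/2) := by
    have hP : (0:ℝ) < (n:ℝ)^((γ+1)/2) := Real.rpow_pos_of_pos hn0 _
    have hsplit : (n:ℝ)^((γ-1)/2) = (n:ℝ)^((γ+1)/2) / n := by
      have e1 : (n:ℝ)^((γ-1)/2) = (n:ℝ)^((γ+1)/2 + (-1 : ℝ)) := by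
        rw [show (γ-1)/2 = (γ+1)/2 + (-1:ℝ) by ring]
      rw [e1, Real.rpow_add hn0, Real.rpow_neg_one]
      ring
    rw [hsplit, div_le_div_iff₀ (by positivity) hn0]
    have : ((n:ℝ)-1) * (n:ℝ) ≤ (n:ℝ)^2 := by nlinarith
    nlinarith
  have k1 : a * (((n:ℝ)-1) * Real.sqrt n / (n:ℝ)^2) * u
      ≤ a * (Real.sqrt ((n:ℝ)-1) / n) * u := by
    gcongr
  have k2 : c * (((n:ℝ)-1) * (n:ℝ)^((γ+1)/2) / (n:ℝ)^2) * Q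
      ≤ c * (n:ℝ)^((γ-1)/2) * Q := by
    gcongr
  -- combine
  have hfirst : ∑ k ∈ Finset.Icc 1 n, (1/2) * (x k - x (k-1))^2 = (1/2) * u^2 := by
    rw [hsq, ← Finset.mul_sum]
  have hmain : (1/(n:ℝ)^2) * ∑ k ∈ Finset.Icc 1 (n-1), F ((k:ℝ)/n) (x k)
      ≥ -(a * (Real.sqrt ((n:ℝ)-1) / n) * u) - c * (n:ℝ)^((γ-1)/2) * Q := by
    have step1 : (1/(n:ℝ)^2) * (((n:ℝ) - 1) * (-a * M - c * M ^ (γ+1)))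
        ≤ (1/(n:ℝ)^2) * ∑ k ∈ Finset.Icc 1 (n-1), F ((k:ℝ)/n) (x k) := by
      apply mul_le_mul_of_nonneg_left hTsum (by positivity)
    have step2 : (1/(n:ℝ)^2) * (((n:ℝ) - 1) * (-a * M - c * M ^ (γ+1)))
        = -(a * (((n:ℝ)-1) * Real.sqrt n / (n:ℝ)^2) * u)
          - c * (((n:ℝ)-1) * (n:ℝ)^((γ+1)/2) / (n:ℝ)^2) * Q := by
      rw [hMr, hM]; ring
    rw [step2] at step1
    linarith
  rw [hfirst]
  linarith [hmain]
end
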